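/- Cusp formula for the rotation number (averaged form): Let γ = (x, y, z) : ℝ → ℝ³ be a twice continuously differentiable regular closed Legendrian curve such that y' has only finitely many zeros s₁, …, s_k in [0, 2π), each nondegenerate (y''(sᵢ) ≠ 0). Then rot(γ) = (1/2)·Σᵢ sign(x'(sᵢ)·y''(sᵢ)); that is, rot(γ) = (c₋ − c₊)/2, where c₋ is the number of zeros of y' with x'·y'' > 0 (downward-oriented cusps of the front) and c₊ is the number of zeros with x'·y'' < 0 (upward-oriented cusps). -/

import Mathlib

open Real

noncomputable section

/-- A regular closed curve in the plane: continuously differentiable,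
`2π`-periodic, with nowhere vanishing derivative. -/
def IsRegularClosedCurve (γ : ℝ → ℝ × ℝ) : Prop :=
  ContDiff ℝ 1 γ ∧ (∀ s, γ (s + 2 * π) = γ s) ∧ ∀ s, deriv γ s ≠ 0

/-- `γ` has rotation number `n`: there is a continuous angle function `θ` for the
velocity vector with `θ (2π) - θ 0 = 2πn`. -/
def HasRotationNumber (γ : ℝ → ℝ × ℝ) (n : ℤ) : Prop :=
  ∃ θ : ℝ → ℝ, Continuous θ ∧
    (∀ s, deriv γ s = ‖deriv γ s‖ • (Real.cos (θ s), Real.sin (θ s))) ∧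
    θ (2 * π) - θ 0 = 2 * π * (n : ℝ)

/-- A regular homotopy: a family of regular closed curves, jointly continuous
in `(s, t)` together with its `s`-derivative, for `t ∈ [0,1]`. -/
def IsRegularHomotopy (Γ : ℝ → ℝ → ℝ × ℝ) : Prop :=
  (∀ t ∈ Set.Icc (0:ℝ) 1, IsRegularClosedCurve (Γ t)) ∧
  ContinuousOn (fun p : ℝ × ℝ => Γ p.2 p.1) (Set.univ ×ˢ Set.Icc (0:ℝ) 1) ∧
  ContinuousOn (fun p : ℝ × ℝ => deriv (Γ p.2) p.1) (Set.univ ×ˢ Set.Icc (0:ℝ) 1)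

def RegularlyHomotopic (γ₀ γ₁ : ℝ → ℝ × ℝ) : Prop :=
  ∃ Γ : ℝ → ℝ → ℝ × ℝ, IsRegularHomotopy Γ ∧ Γ 0 = γ₀ ∧ Γ 1 = γ₁

/-- The coordinate functions of a space curve `γ = (x, y, z) : ℝ → ℝ³`. -/
def curveX (γ : ℝ → ℝ × ℝ × ℝ) : ℝ → ℝ := fun s => (γ s).1
def curveY (γ : ℝ → ℝ × ℝ × ℝ) : ℝ → ℝ := fun s => (γ s).2.1
def curveZ (γ : ℝ → ℝ × ℝ × ℝ) : ℝ → ℝ := fun s => (γ s).2.2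

/-- The Legendrian condition `z' + x·y' ≡ 0` for the standard contact
structure `ξ = ker (dz + x dy)` on `ℝ³`. -/
def IsLegendrian (γ : ℝ → ℝ × ℝ × ℝ) : Prop :=
  ∀ s, deriv (curveZ γ) s + curveX γ s * deriv (curveY γ) s = 0

/-- A regular closed Legendrian curve in `(ℝ³, ξ)`. -/
def IsRegularClosedLegendrian (γ : ℝ → ℝ × ℝ × ℝ) : Prop :=
  ContDiff ℝ 1 γ ∧ (∀ s, γ (s + 2 * π) = γ s) ∧ (∀ s, deriv γ s ≠ 0) ∧ IsLegendrian γ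

/-- The Lagrangian projection `(x, y, z) ↦ (x, y)`. -/
def LagrangianProj (γ : ℝ → ℝ × ℝ × ℝ) : ℝ → ℝ × ℝ :=
  fun s => ((γ s).1, (γ s).2.1)

/-- The rotation number of a Legendrian curve, measured in the frame
`e₁ = ∂ₓ`, `e₂ = ∂_y - x ∂_z` of `ξ`, in which `γ'` has coefficients `(x', y')`. -/
def HasLegendrianRotationNumber (γ : ℝ → ℝ × ℝ × ℝ) (n : ℤ) : Prop :=
  ∃ θ : ℝ → ℝ, Continuous θ ∧
    (∀ s, (deriv (curveX γ) s, deriv (curveY γ) s) =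
      ‖(deriv (curveX γ) s, deriv (curveY γ) s)‖ • (Real.cos (θ s), Real.sin (θ s))) ∧
    θ (2 * π) - θ 0 = 2 * π * (n : ℝ)

/-- A Legendrian regular homotopy: a family of regular closed Legendrian
curves, jointly continuous in `(s,t)` together with its `s`-derivative. -/
def IsLegendrianRegularHomotopy (Γ : ℝ → ℝ → ℝ × ℝ × ℝ) : Prop :=
  (∀ t ∈ Set.Icc (0:ℝ) 1, IsRegularClosedLegendrian (Γ t)) ∧
  ContinuousOn (fun p : ℝ × ℝ => Γ p.2 p.1) (Set.univ ×ˢ Set.Icc (0:ℝ) 1) ∧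
  ContinuousOn (fun p : ℝ × ℝ => deriv (Γ p.2) p.1) (Set.univ ×ˢ Set.Icc (0:ℝ) 1)

def LegendrianRegularlyHomotopic (γ₀ γ₁ : ℝ → ℝ × ℝ × ℝ) : Prop :=
  ∃ Γ : ℝ → ℝ → ℝ × ℝ × ℝ, IsLegendrianRegularHomotopy Γ ∧ Γ 0 = γ₀ ∧ Γ 1 = γ₁


noncomputable section

/-- `x` is an integer multiple of `π`. -/
def PiMult (x : ℝ) : Prop := ∃ k : ℤ, x = k * π

/-- A transverse crossing of the lattice `πℤ` at `c`, with sign `ε`. -/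
def CrossAt (θ : ℝ → ℝ) (ε : ℤ) (c : ℝ) : Prop :=
  PiMult (θ c) ∧ (ε = 1 ∨ ε = -1) ∧
    ∃ δ > 0, ∀ s, |s - c| < δ → s ≠ c → 0 < (ε : ℝ) * ((θ s - θ c) * (s - c))

lemma floor_div_pi_eq {x : ℝ} {k : ℤ} (h1 : (k : ℝ) * π ≤ x) (h2 : x < ((k : ℝ) + 1) * π) :
    ⌊x / π⌋ = k := by
  have hπ := Real.pi_pos
  rw [Int.floor_eq_iff]
  constructor
  · rw [le_div_iff₀ hπ]; linarith
  · rw [div_lt_iff₀ hπ]; linarith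

lemma pimult_unique {k k' : ℤ} (h : (k : ℝ) * π = (k' : ℝ) * π) : k = k' := by
  have : (k : ℝ) = k' := mul_right_cancel₀ Real.pi_ne_zero h
  exact_mod_cast this

/-- (L1): no crossings on `[a,b]` implies equal floors. -/
lemma floor_eq_of_no_cross {θ : ℝ → ℝ} (hθ : Continuous θ) {a b : ℝ} (hab : a ≤ b)
    (h : ∀ s ∈ Set.Icc a b, ¬ PiMult (θ s)) :
    ⌊θ a / π⌋ = ⌊θ b / π⌋ := by
  have hπ := Real.pi_pos
  by_contra hne
  rcases lt_or_gt_of_ne hne with hlt | hlt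
  · set k := ⌊θ b / π⌋ with hk
    have h1 : (k : ℝ) * π ≤ θ b := by
      have := Int.floor_le (θ b / π)
      calc (k:ℝ) * π ≤ (θ b / π) * π := mul_le_mul_of_nonneg_right this hπ.le
        _ = θ b := by field_simp
    have h2 : θ a < (k : ℝ) * π := by
      have : θ a / π < (k : ℝ) := by exact_mod_cast Int.floor_lt.mp hlt
      calc θ a = (θ a / π) * π := by field_simp
        _ < (k:ℝ) * π := mul_lt_mul_of_pos_right this hπ
    obtain ⟨s, hs, hθs⟩ := intermediate_value_Icc hab hθ.continuousOn ⟨h2.le, h1⟩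
    exact h s hs ⟨k, hθs⟩
  · set k := ⌊θ a / π⌋ with hk
    have h1 : (k : ℝ) * π ≤ θ a := by
      have := Int.floor_le (θ a / π)
      calc (k:ℝ) * π ≤ (θ a / π) * π := mul_le_mul_of_nonneg_right this hπ.le
        _ = θ a := by field_simp
    have h2 : θ b < (k : ℝ) * π := by
      have : θ b / π < (k : ℝ) := by exact_mod_cast Int.floor_lt.mp hlt
      calc θ b = (θ b / π) * π := by field_simp
        _ < (k:ℝ) * π := mul_lt_mul_of_pos_right this hπ
    obtain ⟨s, hs, hθs⟩ := intermediate_value_Icc' hab hθ.continuousOn ⟨h2.le, h1⟩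
    exact h s hs ⟨k, hθs⟩

/-- (L2): local floors on each side of a transverse crossing. -/
lemma cross_floor {θ : ℝ → ℝ} (hθ : Continuous θ) {ε : ℤ} {c : ℝ} {k : ℤ}
    (hck : θ c = (k : ℝ) * π) (h : CrossAt θ ε c) :
    ∃ δ > 0,
      (∀ s, c < s → s < c + δ → ⌊θ s / π⌋ = k - (if ε = 1 then 0 else 1)) ∧
      (∀ s, c - δ < s → s < c → ⌊θ s / π⌋ = k - (if ε = 1 then 1 else 0)) := by
  have hπ := Real.pi_pos
  obtain ⟨-, hε, δ₁, hδ₁, hcr⟩ := h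
  obtain ⟨δ₂, hδ₂, hcont⟩ := Metric.continuousAt_iff.mp hθ.continuousAt (ε := π) hπ
  refine ⟨min δ₁ δ₂, lt_min hδ₁ hδ₂, ?_, ?_⟩
  all_goals {
    intro s hs1 hs2
    have hne : s ≠ c := by first | exact ne_of_gt hs1 | exact ne_of_lt hs2
    have hd : |s - c| < min δ₁ δ₂ := by
      rw [abs_sub_lt_iff]; constructor <;> [linarith [lt_min hδ₁ hδ₂]; linarith [lt_min hδ₁ hδ₂]]
    have h1 := hcr s (hd.trans_le (min_le_left _ _)) hne
    have h2 : |θ s - θ c| < π := by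
      have := hcont (show dist s c < δ₂ by rw [Real.dist_eq]; exact hd.trans_le (min_le_right _ _))
      rwa [Real.dist_eq] at this
    rw [hck] at h1 h2
    rw [abs_sub_lt_iff] at h2
    obtain ⟨h2a, h2b⟩ := h2
    rcases hε with rfl | rfl
    · push_cast at h1
      simp only [if_pos rfl]
      first
      | -- right side, ε = 1 : θ s > kπ, floor = k
        (have hgt : (k:ℝ) * π < θ s := by nlinarith
         simpa using floor_div_pi_eq hgt.le (by push_cast; nlinarith))
      | -- left side, ε = 1 : θ s < kπ, floor = k - 1
        (have hlt : θ s < (k:ℝ) * π := by nlinarith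
         have : ⌊θ s / π⌋ = k - 1 := floor_div_pi_eq (by push_cast; nlinarith) (by push_cast; nlinarith)
         simpa using this)
    · push_cast at h1
      norm_num
      first
      | -- right side, ε = -1 : θ s < kπ, floor = k - 1
        (have hlt : θ s < (k:ℝ) * π := by nlinarith
         exact floor_div_pi_eq (by push_cast; nlinarith) (by push_cast; nlinarith))
      | -- left side, ε = -1 : θ s > kπ, floor = k
        (have hgt : (k:ℝ) * π < θ s := by nlinarith
         exact floor_div_pi_eq hgt.le (by push_cast; nlinarith)) }
open Real

section
variable {θ : ℝ → ℝ}

/-- Left endpoint index. -/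
def LVal (θ : ℝ → ℝ) (ε : ℝ → ℤ) (a : ℝ) (La : ℤ) : Prop :=
  (¬ PiMult (θ a) ∧ La = ⌊θ a / π⌋) ∨
    ∃ k : ℤ, θ a = (k : ℝ) * π ∧ La = k - (if ε a = 1 then 1 else 0)

/-- Right endpoint index. -/
def RVal (θ : ℝ → ℝ) (ε : ℝ → ℤ) (b : ℝ) (Rb : ℤ) : Prop :=
  (¬ PiMult (θ b) ∧ Rb = ⌊θ b / π⌋) ∨
    ∃ k : ℤ, θ b = (k : ℝ) * π ∧ Rb = k - (if ε b = 1 then 0 else 1)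

theorem crossing_count (hθ : Continuous θ) (ε : ℝ → ℤ) :
    ∀ (T : Finset ℝ) (a b : ℝ), a ≤ b →
    (∀ s ∈ Set.Icc a b, (PiMult (θ s) ↔ s ∈ T)) →
    (↑T ⊆ Set.Icc a b) →
    (∀ s ∈ T, CrossAt θ (ε s) s) →
    ∀ (La Rb : ℤ), LVal θ ε a La → RVal θ ε b Rb →
    (∑ s ∈ T, ε s) = Rb - La := by
  intro T
  induction T using Finset.strongInduction with
  | _ T IH =>
  intro a b hab hT hTsub hcross La Rb hLa hRb
  rcases Nat.lt_or_ge T.card 2 with hcard | hcard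
  · interval_cases h : T.card
    · -- card 0
      have hTe : T = ∅ := Finset.card_eq_zero.mp h
      subst hTe
      have hnc : ∀ s ∈ Set.Icc a b, ¬ PiMult (θ s) := fun s hs hp => by
        simpa using (hT s hs).mp hp
      have hLa' : La = ⌊θ a / π⌋ := by
        rcases hLa with ⟨-, h⟩ | ⟨k, hk, -⟩
        · exact h
        · exact absurd ⟨k, hk⟩ (hnc a ⟨le_refl a, hab⟩)
      have hRb' : Rb = ⌊θ b / π⌋ := by
        rcases hRb with ⟨-, h⟩ | ⟨k, hk, -⟩
        · exact h
        · exact absurd ⟨k, hk⟩ (hnc b ⟨hab, le_refl b⟩)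
      rw [Finset.sum_empty, hLa', hRb', floor_eq_of_no_cross hθ hab hnc]
      ring
    · -- card 1
      obtain ⟨c, hTc⟩ := Finset.card_eq_one.mp h
      subst hTc
      have hcmem : c ∈ ({c} : Finset ℝ) := Finset.mem_singleton_self c
      obtain ⟨hac, hcb⟩ := hTsub (Finset.mem_coe.mpr hcmem)
      have hcr := hcross c hcmem
      obtain ⟨⟨k, hk⟩, hε, -⟩ := hcr
      obtain ⟨δ, hδ, hright, hleft⟩ := cross_floor hθ hk (hcross c hcmem)
      -- Claim A : La = k - (if ε c = 1 then 1 else 0)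
      have hA : La = k - (if ε c = 1 then 1 else 0) := by
        rcases hLa with ⟨hnp, hLa⟩ | ⟨k', hk', hLa⟩
        · -- a ≠ c
          have hac' : a < c := by
            rcases lt_or_eq_of_le hac with h | h
            · exact h
            · exact absurd ⟨k, h ▸ hk⟩ hnp
          set p := max a (c - δ/2) with hp
          have hpc : p < c := max_lt hac' (by linarith)
          have hpd : c - δ < p := lt_of_lt_of_le (by linarith) (le_max_right _ _)
          have hap : a ≤ p := le_max_left _ _
          have hfloor : ⌊θ a / π⌋ = ⌊θ p / π⌋ := by
            apply floor_eq_of_no_cross hθ hap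
            intro s hs hpm
            have hsc : s ∈ Set.Icc a b := ⟨hs.1, le_trans (le_trans hs.2 hpc.le) hcb⟩
            have := (hT s hsc).mp hpm
            rw [Finset.mem_singleton] at this
            exact absurd (this ▸ hs.2) (not_le.mpr (this ▸ hpc))
          rw [hLa, hfloor, hleft p hpd hpc]
        · have hacp : PiMult (θ a) := ⟨k', hk'⟩
          have : a = c := by
            have := (hT a ⟨le_refl a, hab⟩).mp hacp
            simpa using this
          subst this
          have hk'' : k' = k := pimult_unique (by rw [← hk', ← hk])
          subst hk''
          exact hLa
      have hB : Rb = k - (if ε c = 1 then 0 else 1) := by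
        rcases hRb with ⟨hnp, hRb⟩ | ⟨k', hk', hRb⟩
        · have hcb' : c < b := by
            rcases lt_or_eq_of_le hcb with h | h
            · exact h
            · exact absurd ⟨k, h ▸ hk⟩ hnp
          set p := min b (c + δ/2) with hp
          have hpc : c < p := lt_min hcb' (by linarith)
          have hpd : p < c + δ := lt_of_le_of_lt (min_le_right _ _) (by linarith)
          have hpb : p ≤ b := min_le_left _ _
          have hfloor : ⌊θ p / π⌋ = ⌊θ b / π⌋ := by
            apply floor_eq_of_no_cross hθ hpb
            intro s hs hpm
            have hsc : s ∈ Set.Icc a b := ⟨le_trans hac (le_trans hpc.le hs.1), hs.2⟩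
            have := (hT s hsc).mp hpm
            rw [Finset.mem_singleton] at this
            exact absurd (this ▸ hs.1) (not_le.mpr (this ▸ hpc))
          rw [hRb, ← hfloor, hright p hpc hpd]
        · have hbcp : PiMult (θ b) := ⟨k', hk'⟩
          have : b = c := by
            have := (hT b ⟨hab, le_refl b⟩).mp hbcp
            simpa using this
          subst this
          have hk'' : k' = k := pimult_unique (by rw [← hk', ← hk])
          subst hk''
          exact hRb
      rw [Finset.sum_singleton, hA, hB]
      rcases hε with h | h <;> rw [h] <;> norm_num
  · -- card ≥ 2 : split
    obtain ⟨c₁, hc₁, c₂, hc₂, hne⟩ := Finset.one_lt_card.mp hcard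
    -- order them
    wlog hlt : c₁ < c₂ generalizing c₁ c₂
    · exact this c₂ hc₂ c₁ hc₁ hne.symm ((hne.lt_or_gt).resolve_left hlt)
    -- find d between, not in T
    obtain ⟨d, hd, hdT⟩ := (Set.Ioo_infinite hlt).exists_notMem_finset T
    have hd1 : c₁ < d := hd.1
    have hd2 : d < c₂ := hd.2
    have had : a ≤ d := le_trans (hTsub hc₁).1 hd1.le
    have hdb : d ≤ b := le_trans hd2.le (hTsub hc₂).2
    have hdnp : ¬ PiMult (θ d) := fun hp => hdT ((hT d ⟨had, hdb⟩).mp hp)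
    set T₁ := T.filter (fun s => s < d) with hT₁
    set T₂ := T.filter (fun s => ¬ s < d) with hT₂
    have hmem1 : ∀ s, s ∈ T₁ ↔ s ∈ T ∧ s < d := by intro s; simp [hT₁]
    have hmem2 : ∀ s, s ∈ T₂ ↔ s ∈ T ∧ d < s := by
      intro s; simp only [hT₂, Finset.mem_filter, not_lt]
      constructor
      · rintro ⟨hs, hds⟩
        exact ⟨hs, lt_of_le_of_ne hds (fun h => hdT (h ▸ hs))⟩
      · rintro ⟨hs, hds⟩; exact ⟨hs, hds.le⟩
    have hsub1 : T₁ ⊂ T := by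
      refine ⟨Finset.filter_subset _ _, fun hsub => ?_⟩
      have := (hmem1 c₂).mp (hsub hc₂)
      exact absurd this.2 (not_lt.mpr hd2.le)
    have hsub2 : T₂ ⊂ T := by
      refine ⟨Finset.filter_subset _ _, fun hsub => ?_⟩
      have := (hmem2 c₁).mp (hsub hc₁)
      exact absurd this.2 (not_lt.mpr hd1.le)
    have e1 := IH T₁ hsub1 a d had
      (fun s hs => by
        rw [hT s ⟨hs.1, le_trans hs.2 hdb⟩, hmem1]
        constructor
        · intro h
          refine ⟨h, lt_of_le_of_ne hs.2 (fun he => hdT (he ▸ h))⟩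
        · exact fun h => h.1)
      (fun s hs => by
        have := (hmem1 s).mp hs
        exact ⟨(hTsub this.1).1, this.2.le⟩)
      (fun s hs => hcross s ((hmem1 s).mp hs).1)
      La ⌊θ d / π⌋ hLa (Or.inl ⟨hdnp, rfl⟩)
    have e2 := IH T₂ hsub2 d b hdb
      (fun s hs => by
        rw [hT s ⟨le_trans had hs.1, hs.2⟩, hmem2]
        constructor
        · intro h
          refine ⟨h, lt_of_le_of_ne hs.1 (fun he => hdT (he.symm ▸ h))⟩
        · exact fun h => h.1
        )
      (fun s hs => by
        have := (hmem2 s).mp hs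
        exact ⟨this.2.le, (hTsub this.1).2⟩)
      (fun s hs => hcross s ((hmem2 s).mp hs).1)
      ⌊θ d / π⌋ Rb (Or.inl ⟨hdnp, rfl⟩) hRb
    have hsum : (∑ s ∈ T₁, ε s) + (∑ s ∈ T₂, ε s) = ∑ s ∈ T, ε s :=
      Finset.sum_filter_add_sum_filter_not T _ ε
    omega
end
lemma crossAt_of_deriv {θ : ℝ → ℝ} {c D : ℝ} (hD : HasDerivAt θ D c) (hDne : D ≠ 0)
    (hpm : PiMult (θ c)) : CrossAt θ (if 0 < D then 1 else -1) c := by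
  refine ⟨hpm, by by_cases h : 0 < D <;> simp [h], ?_⟩
  have hslope := hasDerivAt_iff_tendsto_slope.mp hD
  rcases hDne.lt_or_gt with hneg | hpos
  · have hev : ∀ᶠ s in nhdsWithin c {c}ᶜ, slope θ c s < 0 := hslope.eventually (gt_mem_nhds hneg)
    obtain ⟨δ, hδ, hball⟩ := Metric.mem_nhdsWithin_iff.mp hev
    refine ⟨δ, hδ, fun s hs hne => ?_⟩
    have hsl : slope θ c s < 0 :=
      hball ⟨Metric.mem_ball.mpr (by rw [Real.dist_eq]; exact hs), hne⟩
    rw [slope_def_field, div_neg_iff] at hsl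
    have hif : (if 0 < D then (1:ℤ) else -1) = -1 := by simp [not_lt.mpr hneg.le]
    rw [hif]; push_cast
    rcases hsl with ⟨h1, h2⟩ | ⟨h1, h2⟩ <;> nlinarith
  · have hev : ∀ᶠ s in nhdsWithin c {c}ᶜ, 0 < slope θ c s := hslope.eventually (lt_mem_nhds hpos)
    obtain ⟨δ, hδ, hball⟩ := Metric.mem_nhdsWithin_iff.mp hev
    refine ⟨δ, hδ, fun s hs hne => ?_⟩
    have hsl : 0 < slope θ c s :=
      hball ⟨Metric.mem_ball.mpr (by rw [Real.dist_eq]; exact hs), hne⟩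
    rw [slope_def_field, div_pos_iff] at hsl
    have hif : (if 0 < D then (1:ℤ) else -1) = 1 := by simp [hpos]
    rw [hif]; push_cast
    rcases hsl with ⟨h1, h2⟩ | ⟨h1, h2⟩ <;> nlinarith

/-- **Cusp formula (averaged form):** `rot γ = (c₋ - c₊)/2`, i.e. twice the
rotation number is the sum over all zeros `s` of `y'` in `[0, 2π)` of
`sign (x'(s)·y''(s))`. -/
theorem two_rot_eq_down_sub_up (γ : ℝ → ℝ × ℝ × ℝ)
    (hsm : ContDiff ℝ 2 γ) (hreg : IsRegularClosedLegendrian γ)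
    (S : Finset ℝ) (hSsub : ↑S ⊆ Set.Ico (0:ℝ) (2 * π))
    (hS : ∀ s ∈ Set.Ico (0:ℝ) (2 * π), (deriv (curveY γ) s = 0 ↔ s ∈ S))
    (hnd : ∀ s ∈ S, deriv (deriv (curveY γ)) s ≠ 0)
    (n : ℤ) (hn : HasLegendrianRotationNumber γ n) :
    2 * n = ∑ s ∈ S,
      (if 0 < deriv (curveX γ) s * deriv (deriv (curveY γ)) s then (1 : ℤ) else -1) := by
  obtain ⟨θ, hθc, hθeq, hθtot⟩ := hn
  have hπ := Real.pi_pos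
  set sgn : ℝ → ℤ :=
    fun s => if 0 < deriv (curveX γ) s * deriv (deriv (curveY γ)) s then (1:ℤ) else -1
    with hsgn
  -- smoothness of components
  have hX2 : ContDiff ℝ 2 (curveX γ) := contDiff_fst.comp hsm
  have hY2 : ContDiff ℝ 2 (curveY γ) := contDiff_fst.comp (contDiff_snd.comp hsm)
  have hZ2 : ContDiff ℝ 2 (curveZ γ) := contDiff_snd.comp (contDiff_snd.comp hsm)
  have hX'1 : ContDiff ℝ 1 (deriv (curveX γ)) := by
    have h' : ContDiff ℝ (1+1) (curveX γ) := by norm_num; exact hX2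
    exact (contDiff_succ_iff_deriv.mp h').2.2
  have hY'1 : ContDiff ℝ 1 (deriv (curveY γ)) := by
    have h' : ContDiff ℝ (1+1) (curveY γ) := by norm_num; exact hY2
    exact (contDiff_succ_iff_deriv.mp h').2.2
  have hX'd : Differentiable ℝ (deriv (curveX γ)) := hX'1.differentiable one_ne_zero
  have hY'd : Differentiable ℝ (deriv (curveY γ)) := hY'1.differentiable one_ne_zero
  have hXd : Differentiable ℝ (curveX γ) := hX2.differentiable two_ne_zero
  have hYd : Differentiable ℝ (curveY γ) := hY2.differentiable two_ne_zero
  have hZd : Differentiable ℝ (curveZ γ) := hZ2.differentiable two_ne_zero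
  -- derivative of γ componentwise
  have hderiv : ∀ s, HasDerivAt γ
      (deriv (curveX γ) s, deriv (curveY γ) s, deriv (curveZ γ) s) s := by
    intro s
    exact HasDerivAt.prodMk ((hXd s).hasDerivAt) (HasDerivAt.prodMk ((hYd s).hasDerivAt) ((hZd s).hasDerivAt))
  -- nonvanishing of (x', y')
  have hne0 : ∀ s, (deriv (curveX γ) s, deriv (curveY γ) s) ≠ (0 : ℝ × ℝ) := by
    intro s h
    have hx0 : deriv (curveX γ) s = 0 := by simpa using congrArg Prod.fst h
    have hy0 : deriv (curveY γ) s = 0 := by simpa using congrArg Prod.snd h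
    have hz0 : deriv (curveZ γ) s = 0 := by
      have := hreg.2.2.2 s
      rw [hy0] at this; simpa using this
    have : deriv γ s = 0 := by
      rw [(hderiv s).deriv, hx0, hy0, hz0]
      rfl
    exact hreg.2.2.1 s this
  have hr : ∀ s, 0 < ‖(deriv (curveX γ) s, deriv (curveY γ) s)‖ :=
    fun s => norm_pos_iff.mpr (hne0 s)
  have hx : ∀ s, deriv (curveX γ) s
      = ‖(deriv (curveX γ) s, deriv (curveY γ) s)‖ * Real.cos (θ s) := by
    intro s; have := congrArg Prod.fst (hθeq s); simpa using this
  have hy : ∀ s, deriv (curveY γ) s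
      = ‖(deriv (curveX γ) s, deriv (curveY γ) s)‖ * Real.sin (θ s) := by
    intro s; have := congrArg Prod.snd (hθeq s); simpa using this
  have hPiM : ∀ s, PiMult (θ s) ↔ deriv (curveY γ) s = 0 := by
    intro s
    have hsin : Real.sin (θ s) = 0 ↔ deriv (curveY γ) s = 0 := by
      rw [hy s, mul_eq_zero]
      constructor
      · exact fun h => Or.inr h
      · rintro (h | h)
        · exact absurd h (ne_of_gt (hr s))
        · exact h
    rw [← hsin]
    constructor
    · rintro ⟨k, hk⟩; rw [hk]; exact Real.sin_int_mul_pi k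
    · intro h; obtain ⟨k, hk⟩ := Real.sin_eq_zero_iff.mp h; exact ⟨k, hk.symm⟩
  -- the crossing lemma
  have hcross : ∀ c, deriv (curveY γ) c = 0 → deriv (deriv (curveY γ)) c ≠ 0 →
      CrossAt θ (sgn c) c := by
    intro c hy0 hy2
    have hxc : deriv (curveX γ) c ≠ 0 := by
      intro h; exact hne0 c (by rw [h, hy0]; exact Prod.mk_zero_zero)
    have hpm : PiMult (θ c) := (hPiM c).mpr hy0
    obtain ⟨k, hk⟩ := hpm
    -- local formula for θ
    have hUopen : IsOpen (θ ⁻¹' Set.Ioo ((k:ℝ)*π - π/2) ((k:ℝ)*π + π/2)) :=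
      isOpen_Ioo.preimage hθc
    have hcU : c ∈ θ ⁻¹' Set.Ioo ((k:ℝ)*π - π/2) ((k:ℝ)*π + π/2) := by
      constructor <;> rw [hk] <;> linarith
    have hev : θ =ᶠ[nhds c]
        fun s => θ c + Real.arctan (deriv (curveY γ) s / deriv (curveX γ) s) := by
      filter_upwards [hUopen.mem_nhds hcU] with s hs
      obtain ⟨hs1, hs2⟩ := hs
      have hφ1 : -(π/2) < θ s - (k:ℝ)*π := by linarith
      have hφ2 : θ s - (k:ℝ)*π < π/2 := by linarith
      have hrs := hr s
      obtain ⟨r, hrpos, hxs, hys⟩ : ∃ r, 0 < r ∧ deriv (curveX γ) s = r * Real.cos (θ s) ∧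
          deriv (curveY γ) s = r * Real.sin (θ s) := ⟨_, hr s, hx s, hy s⟩
      have htan : Real.tan (θ s - (k:ℝ)*π)
          = deriv (curveY γ) s / deriv (curveX γ) s := by
        rw [Real.tan_eq_sin_div_cos, Real.sin_sub_int_mul_pi, Real.cos_sub_int_mul_pi,
          hxs, hys]
        rw [mul_div_mul_left _ _ (zpow_ne_zero k (by norm_num : (-1:ℝ) ≠ 0)),
          mul_div_mul_left _ _ (ne_of_gt hrpos)]
      have harct : Real.arctan (deriv (curveY γ) s / deriv (curveX γ) s)
          = θ s - (k:ℝ)*π := by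
        rw [← htan, Real.arctan_tan hφ1 hφ2]
      rw [harct, hk]; ring
    -- derivative of the local formula
    have hdiv : HasDerivAt (fun s => deriv (curveY γ) s / deriv (curveX γ) s)
        ((deriv (deriv (curveY γ)) c * deriv (curveX γ) c
          - deriv (curveY γ) c * deriv (deriv (curveX γ)) c) / (deriv (curveX γ) c)^2) c :=
      ((hY'd c).hasDerivAt).div ((hX'd c).hasDerivAt) hxc
    have harc := (Real.hasDerivAt_arctan (deriv (curveY γ) c / deriv (curveX γ) c)).comp c hdiv
    have hsum := harc.const_add (θ c)
    have hθD := hsum.congr_of_eventuallyEq hev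
    have hDval : (1 / (1 + (deriv (curveY γ) c / deriv (curveX γ) c) ^ 2)) *
        ((deriv (deriv (curveY γ)) c * deriv (curveX γ) c
          - deriv (curveY γ) c * deriv (deriv (curveX γ)) c) / (deriv (curveX γ) c)^2)
        = deriv (deriv (curveY γ)) c / deriv (curveX γ) c := by
      rw [hy0]; field_simp; ring
    rw [hDval] at hθD
    have hDne : deriv (deriv (curveY γ)) c / deriv (curveX γ) c ≠ 0 := div_ne_zero hy2 hxc
    have := crossAt_of_deriv hθD hDne ⟨k, hk⟩
    have hsgneq : sgn c = if 0 < deriv (deriv (curveY γ)) c / deriv (curveX γ) c then 1 else -1 := by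
      rw [hsgn]
      have hiff : (0 < deriv (curveX γ) c * deriv (deriv (curveY γ)) c)
          ↔ (0 < deriv (deriv (curveY γ)) c / deriv (curveX γ) c) := by
        rw [div_pos_iff, mul_pos_iff]
        constructor
        · rintro (⟨h1, h2⟩ | ⟨h1, h2⟩)
          · exact Or.inl ⟨h2, h1⟩
          · exact Or.inr ⟨h2, h1⟩
        · rintro (⟨h1, h2⟩ | ⟨h1, h2⟩)
          · exact Or.inl ⟨h2, h1⟩
          · exact Or.inr ⟨h2, h1⟩
      simp only [hiff]
    rw [hsgneq]
    exact this
  -- periodicity of derivatives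
  have hper : ∀ s, γ (s + 2*π) = γ s := hreg.2.1
  have hXper : ∀ s, deriv (curveX γ) (s + 2*π) = deriv (curveX γ) s := by
    intro s
    have hfun : (fun t => curveX γ (t + 2*π)) = curveX γ :=
      funext fun t => congrArg Prod.fst (hper t)
    have h2 : deriv (fun t => curveX γ (t + 2*π)) s = deriv (curveX γ) (s + 2*π) :=
      deriv_comp_add_const _ _ _
    rw [hfun] at h2; exact h2.symm
  have hYper : ∀ s, deriv (curveY γ) (s + 2*π) = deriv (curveY γ) s := by
    intro s
    have hfun : (fun t => curveY γ (t + 2*π)) = curveY γ :=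
      funext fun t => congrArg (fun p : ℝ × ℝ × ℝ => p.2.1) (hper t)
    have h2 : deriv (fun t => curveY γ (t + 2*π)) s = deriv (curveY γ) (s + 2*π) :=
      deriv_comp_add_const _ _ _
    rw [hfun] at h2; exact h2.symm
  have hY''per : ∀ s, deriv (deriv (curveY γ)) (s + 2*π) = deriv (deriv (curveY γ)) s := by
    intro s
    have hfun : (fun t => deriv (curveY γ) (t + 2*π)) = deriv (curveY γ) :=
      funext fun t => hYper t
    have h2 : deriv (fun t => deriv (curveY γ) (t + 2*π)) s
        = deriv (deriv (curveY γ)) (s + 2*π) := deriv_comp_add_const _ _ _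
    rw [hfun] at h2; exact h2.symm
  -- endpoint data
  have h2πpos : (0:ℝ) < 2*π := by linarith
  have hsgn2π : sgn (2*π) = sgn 0 := by
    rw [hsgn]
    simp only
    rw [show (2*π : ℝ) = 0 + 2*π by ring, hXper 0, hY''per 0]
  -- main case split
  by_cases h0 : deriv (curveY γ) 0 = 0
  · -- 0 is a cusp; add the crossing at 2π
    have h0S : (0:ℝ) ∈ S := (hS 0 ⟨le_refl 0, h2πpos⟩).mp h0
    have h2πS : (2*π : ℝ) ∉ S := fun h => absurd (hSsub h).2 (lt_irrefl _)
    have hy2π : deriv (curveY γ) (2*π) = 0 := by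
      rw [show (2*π : ℝ) = 0 + 2*π by ring, hYper 0]; exact h0
    have hy''0 : deriv (deriv (curveY γ)) 0 ≠ 0 := hnd 0 h0S
    have hy''2π : deriv (deriv (curveY γ)) (2*π) ≠ 0 := by
      rw [show (2*π : ℝ) = 0 + 2*π by ring, hY''per 0]; exact hy''0
    obtain ⟨k₀, hk₀⟩ := (hPiM 0).mpr h0
    have hT : ∀ s ∈ Set.Icc (0:ℝ) (2*π), (PiMult (θ s) ↔ s ∈ insert (2*π) S) := by
      intro s hs
      rcases lt_or_eq_of_le hs.2 with h | h
      · rw [hPiM s, hS s ⟨hs.1, h⟩, Finset.mem_insert]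
        constructor
        · exact fun hh => Or.inr hh
        · rintro (rfl | hh)
          · exact absurd h (lt_irrefl _)
          · exact hh
      · subst h
        simp only [Finset.mem_insert, true_or, iff_true]
        exact ⟨k₀ + 2*n, by push_cast; push_cast at hk₀; linarith [hθtot]⟩
    have hTsub' : ↑(insert (2*π : ℝ) S) ⊆ Set.Icc (0:ℝ) (2*π) := by
      intro s hs
      rw [Finset.coe_insert, Set.mem_insert_iff] at hs
      rcases hs with rfl | hs
      · exact ⟨by linarith, le_refl _⟩
      · exact ⟨(hSsub hs).1, (hSsub hs).2.le⟩
    have hcross' : ∀ s ∈ insert (2*π : ℝ) S, CrossAt θ (sgn s) s := by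
      intro s hs
      rcases Finset.mem_insert.mp hs with rfl | hs
      · exact hcross _ hy2π hy''2π
      · exact hcross s ((hS s (hSsub hs)).mpr hs) (hnd s hs)
    have hcc := crossing_count hθc sgn (insert (2*π) S) 0 (2*π) h2πpos.le hT hTsub' hcross'
      (k₀ - (if sgn 0 = 1 then 1 else 0))
      ((k₀ + 2*n) - (if sgn (2*π) = 1 then 0 else 1))
      (Or.inr ⟨k₀, hk₀, rfl⟩)
      (Or.inr ⟨k₀ + 2*n, by push_cast; push_cast at hk₀; linarith [hθtot], rfl⟩)
    rw [Finset.sum_insert h2πS, hsgn2π] at hcc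
    have hsgn0 : sgn 0 = 1 ∨ sgn 0 = -1 := by
      rw [hsgn]; by_cases h : 0 < deriv (curveX γ) 0 * deriv (deriv (curveY γ)) 0 <;> simp [h]
    show (2*(n:ℤ)) = ∑ s ∈ S, sgn s
    rcases hsgn0 with h | h <;> rw [h] at hcc <;> simp at hcc <;> omega
  · -- no cusp at 0
    have hnp0 : ¬ PiMult (θ 0) := fun hp => h0 ((hPiM 0).mp hp)
    have hT : ∀ s ∈ Set.Icc (0:ℝ) (2*π), (PiMult (θ s) ↔ s ∈ S) := by
      intro s hs
      rcases lt_or_eq_of_le hs.2 with h | h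
      · rw [hPiM s, hS s ⟨hs.1, h⟩]
      · subst h
        constructor
        · rintro ⟨k, hk⟩
          exfalso
          apply hnp0
          exact ⟨k - 2*n, by push_cast; linarith [hθtot]⟩
        · intro hh; exact absurd (hSsub hh).2 (lt_irrefl _)
    have hTsub' : ↑S ⊆ Set.Icc (0:ℝ) (2*π) := fun s hs => ⟨(hSsub hs).1, (hSsub hs).2.le⟩
    have hcross' : ∀ s ∈ S, CrossAt θ (sgn s) s := fun s hs =>
      hcross s ((hS s (hSsub hs)).mpr hs) (hnd s hs)
    have hnp2π : ¬ PiMult (θ (2*π)) := by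
      rintro ⟨k, hk⟩
      exact hnp0 ⟨k - 2*n, by push_cast; linarith [hθtot]⟩
    have hcc := crossing_count hθc sgn S 0 (2*π) h2πpos.le hT hTsub' hcross'
      ⌊θ 0 / π⌋ ⌊θ (2*π) / π⌋ (Or.inl ⟨hnp0, rfl⟩) (Or.inl ⟨hnp2π, rfl⟩)
    have hθ2 : θ (2*π) = θ 0 + ((2*n : ℤ) : ℝ) * π := by push_cast; linarith [hθtot]
    have hfloor : ⌊θ (2*π) / π⌋ = ⌊θ 0 / π⌋ + 2*n := by
      rw [hθ2, add_div, mul_div_assoc, div_self (ne_of_gt hπ), mul_one, Int.floor_add_intCast]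
    show (2*(n:ℤ)) = ∑ s ∈ S, sgn s
    omega
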